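/- Define x(T) := 2(T−1)³/(1−T³). Let U ⊆ ℂ be open with T³ ≠ 1, T⁶ ≠ 1 and x(T)·(x(T)−1)·(x(T)+8) ≠ 0 for all T ∈ U, let V ⊆ ℂ be open with x(U) ⊆ V, let ψ solve ψ'' = Q₃·ψ on V, and let g : ℂ → ℂ be twice differentiable and nonvanishing on U with g(T)² = x'(T) for all T ∈ U. Then Φ(T) := ψ(x(T))/g(T) solves Φ''(T) = −9T⁴/(T⁶−1)²·Φ(T) on U. -/

import Mathlib

open Complex

/-- `f` solves the equation `ψ'' = Q·ψ` on the open set `U`. -/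
def SolvesOn (Q f : ℂ → ℂ) (U : Set ℂ) : Prop :=
  (∀ x ∈ U, DifferentiableAt ℂ f x) ∧ (∀ x ∈ U, DifferentiableAt ℂ (deriv f) x) ∧
    ∀ x ∈ U, deriv (deriv f) x = Q x * f x

/-- The coefficient of the normal form (3') of the third Chudnovsky equation. -/
noncomputable def Q₃ (x : ℂ) : ℂ :=
  -(1 / 4) * (x ^ 4 + 8 * x ^ 3 + 72 * x ^ 2 - 64 * x + 64)
    / (x ^ 2 * (x - 1) ^ 2 * (x + 8) ^ 2)

/-- The rational substitution of Example 2 of the paper. -/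
noncomputable def xOfT (T : ℂ) : ℂ := 2 * (T - 1) ^ 3 / (1 - T ^ 3)

/-- First derivative of `xOfT` (simplified form). -/
noncomputable def x1fun (T : ℂ) : ℂ := 6 * (1 - T ^ 2) / (T ^ 2 + T + 1) ^ 2

/-- Second derivative of `xOfT` (simplified form). -/
noncomputable def x2fun (T : ℂ) : ℂ := 12 * (T ^ 3 - 3 * T - 1) / (T ^ 2 + T + 1) ^ 3

/-- Third derivative of `xOfT` (simplified form). -/
noncomputable def x3fun (T : ℂ) : ℂ := 36 * (4 * T + 6 * T ^ 2 - T ^ 4) / (T ^ 2 + T + 1) ^ 4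

lemma q_ne {T : ℂ} (h : T ^ 3 ≠ 1) : T ^ 2 + T + 1 ≠ 0 := by
  intro hq
  apply h
  have h1 : T ^ 3 - 1 = (T - 1) * (T ^ 2 + T + 1) := by ring
  have h2 : T ^ 3 - 1 = 0 := by rw [h1, hq, mul_zero]
  linear_combination h2

lemma d_ne {T : ℂ} (h : T ^ 3 ≠ 1) : (1 : ℂ) - T ^ 3 ≠ 0 := by
  intro h0
  exact h (by linear_combination -h0)

lemma hasDerivAt_xOfT {T : ℂ} (hd : (1:ℂ) - T ^ 3 ≠ 0) (hq : T ^ 2 + T + 1 ≠ 0) :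
    HasDerivAt xOfT (x1fun T) T := by
  have hn : HasDerivAt (fun t : ℂ => 2 * (t - 1) ^ 3) (2 * (3 * (T - 1) ^ 2 * 1)) T :=
    (((hasDerivAt_id T).sub_const 1).pow 3).const_mul 2
  have hden : HasDerivAt (fun t : ℂ => 1 - t ^ 3) (-(3 * T ^ 2)) T := by
    simpa using (hasDerivAt_pow 3 T).const_sub 1
  have h := hn.div hden hd
  refine h.congr_deriv ?_
  unfold x1fun
  rw [div_eq_div_iff (pow_ne_zero 2 hd) (pow_ne_zero 2 hq)]
  ring

lemma hasDerivAt_x1fun {T : ℂ} (hq : T ^ 2 + T + 1 ≠ 0) :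
    HasDerivAt x1fun (x2fun T) T := by
  have hn : HasDerivAt (fun t : ℂ => 6 * (1 - t ^ 2)) (6 * (-(2 * T ^ 1))) T := by
    exact ((hasDerivAt_pow 2 T).const_sub 1).const_mul 6
  have hb : HasDerivAt (fun t : ℂ => t ^ 2 + t + 1) (2 * T ^ 1 + 1) T := by
    simpa using ((hasDerivAt_pow 2 T).add (hasDerivAt_id T)).add_const 1
  have hden : HasDerivAt (fun t : ℂ => (t ^ 2 + t + 1) ^ 2)
      (2 * (T ^ 2 + T + 1) ^ 1 * (2 * T ^ 1 + 1)) T := by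
    simpa using hb.fun_pow 2
  have h := hn.div hden (pow_ne_zero 2 hq)
  refine h.congr_deriv ?_
  unfold x2fun
  rw [div_eq_div_iff (pow_ne_zero 2 (pow_ne_zero 2 hq)) (pow_ne_zero 3 hq)]
  ring

lemma hasDerivAt_x2fun {T : ℂ} (hq : T ^ 2 + T + 1 ≠ 0) :
    HasDerivAt x2fun (x3fun T) T := by
  have hn : HasDerivAt (fun t : ℂ => 12 * (t ^ 3 - 3 * t - 1))
      (12 * (3 * T ^ 2 - 3)) T := by
    have h0 : HasDerivAt (fun t : ℂ => t ^ 3 - 3 * t - 1) (3 * T ^ 2 - 3) T := by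
      simpa using (((hasDerivAt_pow 3 T).sub ((hasDerivAt_id T).const_mul 3)).sub_const 1)
    exact h0.const_mul 12
  have hb : HasDerivAt (fun t : ℂ => t ^ 2 + t + 1) (2 * T ^ 1 + 1) T := by
    simpa using ((hasDerivAt_pow 2 T).add (hasDerivAt_id T)).add_const 1
  have hden : HasDerivAt (fun t : ℂ => (t ^ 2 + t + 1) ^ 3)
      (3 * (T ^ 2 + T + 1) ^ 2 * (2 * T ^ 1 + 1)) T := by
    simpa using hb.fun_pow 3
  have h := hn.div hden (pow_ne_zero 3 hq)
  refine h.congr_deriv ?_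
  unfold x3fun
  rw [div_eq_div_iff (pow_ne_zero 2 (pow_ne_zero 3 hq)) (pow_ne_zero 4 hq)]
  ring

set_option maxHeartbeats 1000000 in
lemma pot_identity (T : ℂ) (hq : T ^ 2 + T + 1 ≠ 0) (hm1 : T - 1 ≠ 0)
    (hp1 : T + 1 ≠ 0) (hr : T ^ 2 - T + 1 ≠ 0) (h61 : T ^ 6 - 1 ≠ 0)
    (hX0 : xOfT T ≠ 0) (hX1n : xOfT T - 1 ≠ 0) (hX8n : xOfT T + 8 ≠ 0) :
    Q₃ (xOfT T) * (x1fun T) ^ 2 + 2 * (x2fun T ^ 2 / (4 * x1fun T)) / (x1fun T)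
      - (x3fun T / 2 - x2fun T ^ 2 / (4 * x1fun T)) / (x1fun T)
      = -9 * T ^ 4 / (T ^ 6 - 1) ^ 2 := by
  have hd : (1:ℂ) - T ^ 3 ≠ 0 := by
    intro h
    apply hq
    have h1 : (1:ℂ) - T ^ 3 = -((T - 1) * (T ^ 2 + T + 1)) := by ring
    rw [h1, neg_eq_zero] at h
    rcases mul_eq_zero.mp h with h | h
    · exact absurd h hm1
    · exact h
  have hq' : T * (T + 1) + 1 ≠ 0 := by
    rw [show T * (T + 1) + 1 = T ^ 2 + T + 1 by ring]; exact hq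
  have h1T2 : (1:ℂ) - T ^ 2 ≠ 0 := by
    intro h; apply hp1
    have h1 : (1:ℂ) - T ^ 2 = -((T - 1) * (T + 1)) := by ring
    rw [h1, neg_eq_zero] at h
    rcases mul_eq_zero.mp h with h | h
    · exact absurd h hm1
    · exact h
  have hXv : xOfT T = -2 * (T - 1) ^ 2 / (T ^ 2 + T + 1) := by
    unfold xOfT; rw [div_eq_div_iff hd hq]; ring
  have hX1 : xOfT T - 1 = -3 * (T ^ 2 - T + 1) / (T ^ 2 + T + 1) := by
    rw [hXv]; field_simp [hq']; ring
  have hX8 : xOfT T + 8 = 6 * (T + 1) ^ 2 / (T ^ 2 + T + 1) := by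
    rw [hXv]; field_simp [hq']; ring
  have hx1ne : x1fun T ≠ 0 := by
    unfold x1fun
    exact div_ne_zero (mul_ne_zero (by norm_num) h1T2) (pow_ne_zero 2 hq)
  have hD1 : (xOfT T) ^ 2 * (xOfT T - 1) ^ 2 * (xOfT T + 8) ^ 2 ≠ 0 :=
    mul_ne_zero (mul_ne_zero (pow_ne_zero 2 hX0) (pow_ne_zero 2 hX1n)) (pow_ne_zero 2 hX8n)
  have t1 : Q₃ (xOfT T) * (x1fun T) ^ 2
      = (-3 * (1 + 2 * T ^ 2 + 6 * T ^ 4 + 2 * T ^ 6 + T ^ 8)) / (T ^ 6 - 1) ^ 2 := by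
    unfold Q₃ x1fun
    rw [div_pow, div_mul_div_comm,
      div_eq_div_iff (mul_ne_zero hD1 (pow_ne_zero 2 (pow_ne_zero 2 hq))) (pow_ne_zero 2 h61)]
    rw [hX1, hX8, hXv]
    field_simp [hq']
    ring
  have t2 : 2 * (x2fun T ^ 2 / (4 * x1fun T)) / (x1fun T)
      = (2 + 8 * T - 8 * T ^ 3 + 28 * T ^ 4 - 12 * T ^ 5 - 8 * T ^ 6 + 16 * T ^ 7
          - 6 * T ^ 8 - 4 * T ^ 9 + 2 * T ^ 10) / (T ^ 6 - 1) ^ 2 := by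
    rw [div_eq_div_iff hx1ne (pow_ne_zero 2 h61)]
    unfold x1fun x2fun
    field_simp [hq', h1T2]
    ring
  have t3 : (x3fun T / 2 - x2fun T ^ 2 / (4 * x1fun T)) / (x1fun T)
      = (-1 + 8 * T - 6 * T ^ 2 - 8 * T ^ 3 + 19 * T ^ 4 - 12 * T ^ 5 - 14 * T ^ 6
          + 16 * T ^ 7 - 9 * T ^ 8 - 4 * T ^ 9 + 2 * T ^ 10) / (T ^ 6 - 1) ^ 2 := by
    rw [div_eq_div_iff hx1ne (pow_ne_zero 2 h61)]
    unfold x1fun x2fun x3fun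
    field_simp [hq', h1T2]
    ring
  rw [t1, t2, t3, ← add_div, ← sub_div]
  congr 1
  ring

lemma alg_key (G G1 G2 P A Q : ℂ) (hG : G ≠ 0) :
    (((Q * P * G ^ 2 * G ^ 2 + A * (2 * G * G1)) * G + A * G ^ 2 * G1 -
        (A * G ^ 2 * G1 + P * G2)) * G ^ 2 -
      (A * G ^ 2 * G - P * G1) * (2 * G * G1)) / (G ^ 2) ^ 2 =
    (Q * (G ^ 2) ^ 2 + 2 * ((2 * G * G1) ^ 2 / (4 * G ^ 2)) / G ^ 2 -
        ((2 * G1 * G1 + 2 * G * G2) / 2 - (2 * G * G1) ^ 2 / (4 * G ^ 2)) / G ^ 2) * (P / G) := by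
  have d1 : (2 * G * G1) ^ 2 / (4 * G ^ 2) = G1 ^ 2 := by
    rw [div_eq_iff (by simp [hG] : (4:ℂ) * G ^ 2 ≠ 0)]; ring
  rw [d1]
  have d2 : (2 * G1 * G1 + 2 * G * G2) / 2 - G1 ^ 2 = G * G2 := by ring
  rw [d2]
  have d3 : Q * (G ^ 2) ^ 2 + 2 * G1 ^ 2 / G ^ 2 - G * G2 / G ^ 2
      = (Q * G ^ 6 + 2 * G1 ^ 2 - G * G2) / G ^ 2 := by
    field_simp
  rw [d3, div_mul_div_comm,
    div_eq_div_iff (pow_ne_zero 2 (pow_ne_zero 2 hG)) (mul_ne_zero (pow_ne_zero 2 hG) hG)]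
  ring

theorem chudnovsky_three_example2
    (U V : Set ℂ) (hU : IsOpen U) (hV : IsOpen V)
    (hT1 : ∀ T ∈ U, T ^ 3 ≠ 1)
    (hT2 : ∀ T ∈ U, T ^ 6 ≠ 1)
    (hxne : ∀ T ∈ U, xOfT T * (xOfT T - 1) * (xOfT T + 8) ≠ 0)
    (hxV : ∀ T ∈ U, xOfT T ∈ V)
    (ψ g : ℂ → ℂ)
    (hψ : SolvesOn Q₃ ψ V)
    (hg1 : ∀ T ∈ U, DifferentiableAt ℂ g T)
    (hg2 : ∀ T ∈ U, DifferentiableAt ℂ (deriv g) T)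
    (hgne : ∀ T ∈ U, g T ≠ 0)
    (hgsq : ∀ T ∈ U, g T ^ 2 = deriv xOfT T) :
    SolvesOn (fun T => -9 * T ^ 4 / (T ^ 6 - 1) ^ 2)
      (fun T => ψ (xOfT T) / g T) U := by
  obtain ⟨hψ1, hψ2, hψ3⟩ := hψ
  -- the first derivative of ψ ∘ xOfT
  have hu : ∀ t ∈ U, HasDerivAt (fun s => ψ (xOfT s)) (deriv ψ (xOfT t) * x1fun t) t := by
    intro t ht
    exact ((hψ1 _ (hxV t ht)).hasDerivAt).comp t
      (hasDerivAt_xOfT (d_ne (hT1 t ht)) (q_ne (hT1 t ht)))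
  -- the first derivative of the quotient
  have hmain : ∀ t ∈ U, HasDerivAt (fun s => ψ (xOfT s) / g s)
      ((deriv ψ (xOfT t) * x1fun t * g t - ψ (xOfT t) * deriv g t) / g t ^ 2) t := by
    intro t ht
    exact (hu t ht).div ((hg1 t ht).hasDerivAt) (hgne t ht)
  have hderiv1 : ∀ t ∈ U, deriv (fun s => ψ (xOfT s) / g s) t
      = (deriv ψ (xOfT t) * x1fun t * g t - ψ (xOfT t) * deriv g t) / g t ^ 2 :=
    fun t ht => (hmain t ht).deriv
  have hev : ∀ t ∈ U, deriv (fun s => ψ (xOfT s) / g s)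
      =ᶠ[nhds t] (fun s => (deriv ψ (xOfT s) * x1fun s * g s - ψ (xOfT s) * deriv g s) / g s ^ 2) :=
    fun t ht => Filter.eventuallyEq_of_mem (hU.mem_nhds ht) (fun s hs => hderiv1 s hs)
  -- the derivative of the explicit first-derivative formula
  have hF : ∀ t ∈ U, HasDerivAt
      (fun s => (deriv ψ (xOfT s) * x1fun s * g s - ψ (xOfT s) * deriv g s) / g s ^ 2)
      ((((deriv (deriv ψ) (xOfT t) * x1fun t * x1fun t + deriv ψ (xOfT t) * x2fun t) * g t
          + deriv ψ (xOfT t) * x1fun t * deriv g t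
          - (deriv ψ (xOfT t) * x1fun t * deriv g t + ψ (xOfT t) * deriv (deriv g) t)) * g t ^ 2
        - (deriv ψ (xOfT t) * x1fun t * g t - ψ (xOfT t) * deriv g t)
            * (2 * g t * deriv g t)) / (g t ^ 2) ^ 2) t := by
    intro t ht
    have hq := q_ne (hT1 t ht)
    have hx := hasDerivAt_xOfT (d_ne (hT1 t ht)) hq
    have hA : HasDerivAt (fun s => deriv ψ (xOfT s)) (deriv (deriv ψ) (xOfT t) * x1fun t) t :=
      ((hψ2 _ (hxV t ht)).hasDerivAt).comp t hx
    have h1 : HasDerivAt (fun s => deriv ψ (xOfT s) * x1fun s)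
        (deriv (deriv ψ) (xOfT t) * x1fun t * x1fun t + deriv ψ (xOfT t) * x2fun t) t :=
      hA.mul (hasDerivAt_x1fun hq)
    have h2 := h1.mul ((hg1 t ht).hasDerivAt)
    have h3 := (hu t ht).mul ((hg2 t ht).hasDerivAt)
    have h4 := h2.sub h3
    have h5 : HasDerivAt (fun s => g s ^ 2) (2 * g t * deriv g t) t := by
      have := ((hg1 t ht).hasDerivAt).fun_pow 2
      norm_num at this
      convert this using 1
    exact h4.div h5 (pow_ne_zero 2 (hgne t ht))
  -- the relation g² = x1fun on U, and its derivatives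
  have hsqall : ∀ t ∈ U, g t ^ 2 = x1fun t := fun t ht =>
    (hgsq t ht).trans (hasDerivAt_xOfT (d_ne (hT1 t ht)) (q_ne (hT1 t ht))).deriv
  have h2all : ∀ t ∈ U, 2 * g t * deriv g t = x2fun t := by
    intro t ht
    have hgev : (fun s => g s ^ 2) =ᶠ[nhds t] x1fun :=
      Filter.eventuallyEq_of_mem (hU.mem_nhds ht) (fun s hs => hsqall s hs)
    have e1 : deriv (fun s => g s ^ 2) t = 2 * g t * deriv g t := by
      have h5 : HasDerivAt (fun s => g s ^ 2) (2 * g t * deriv g t) t := by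
        have := ((hg1 t ht).hasDerivAt).fun_pow 2
        norm_num at this
        convert this using 1
      exact h5.deriv
    have e2 : deriv x1fun t = x2fun t := (hasDerivAt_x1fun (q_ne (hT1 t ht))).deriv
    rw [← e1, ← e2]
    exact hgev.deriv_eq
  refine ⟨fun t ht => (hmain t ht).differentiableAt, ?_, ?_⟩
  · intro t ht
    exact ((hF t ht).differentiableAt).congr_of_eventuallyEq (hev t ht)
  · intro t ht
    have hq := q_ne (hT1 t ht)
    have h61 : t ^ 6 - 1 ≠ 0 := sub_ne_zero_of_ne (hT2 t ht)
    have hp3 : t ^ 3 + 1 ≠ 0 := by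
      intro h0
      exact hT2 t ht (by linear_combination (t ^ 3 - 1) * h0)
    have hm1 : t - 1 ≠ 0 := by
      intro h0
      exact hT1 t ht (by linear_combination (t ^ 2 + t + 1) * h0)
    have hp1 : t + 1 ≠ 0 := by
      intro h0
      exact hT2 t ht (by linear_combination (t ^ 5 - t ^ 4 + t ^ 3 - t ^ 2 + t - 1) * h0)
    have hr : t ^ 2 - t + 1 ≠ 0 := by
      intro h0
      exact hp3 (by linear_combination (t + 1) * h0)
    have hX8n : xOfT t + 8 ≠ 0 := right_ne_zero_of_mul (hxne t ht)
    have hX1n : xOfT t - 1 ≠ 0 :=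
      right_ne_zero_of_mul (left_ne_zero_of_mul (hxne t ht))
    have hX0 : xOfT t ≠ 0 :=
      left_ne_zero_of_mul (left_ne_zero_of_mul (hxne t ht))
    have hg0 := hgne t ht
    -- second derivative of Φ equals derivative of the explicit formula
    rw [(hev t ht).deriv_eq, (hF t ht).deriv]
    -- the differential equation for ψ at xOfT t
    rw [hψ3 _ (hxV t ht)]
    -- the third relation:  2 g'² + 2 g g'' = x3fun
    have h3rel : 2 * deriv g t * deriv g t + 2 * g t * deriv (deriv g) t = x3fun t := by
      have hgev2 : (fun s => 2 * g s * deriv g s) =ᶠ[nhds t] x2fun :=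
        Filter.eventuallyEq_of_mem (hU.mem_nhds ht) (fun s hs => h2all s hs)
      have e3 : deriv (fun s => 2 * g s * deriv g s) t
          = 2 * deriv g t * deriv g t + 2 * g t * deriv (deriv g) t := by
        have h6 : HasDerivAt (fun s => 2 * g s * deriv g s)
            (2 * deriv g t * deriv g t + 2 * g t * deriv (deriv g) t) t := by
          have := (((hg1 t ht).hasDerivAt).const_mul 2).fun_mul ((hg2 t ht).hasDerivAt)
          convert this using 1
        exact h6.deriv
      have e4 : deriv x2fun t = x3fun t := (hasDerivAt_x2fun hq).deriv
      rw [← e3, ← e4]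
      exact hgev2.deriv_eq
    have hsq' : g t ^ 2 = x1fun t := hsqall t ht
    have h2rel : 2 * g t * deriv g t = x2fun t := h2all t ht
    show _ = -9 * t ^ 4 / (t ^ 6 - 1) ^ 2 * (ψ (xOfT t) / g t)
    rw [← pot_identity t hq hm1 hp1 hr h61 hX0 hX1n hX8n]
    rw [← hsq', ← h2rel, ← h3rel]
    exact alg_key (g t) (deriv g t) (deriv (deriv g) t) (ψ (xOfT t)) (deriv ψ (xOfT t))
      (Q₃ (xOfT t)) hg0
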